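/- Let n ≥ 1 be an integer and ξ a real number that is not algebraic of degree at most n. Then, as elements of the extended reals, ŵ_n(ξ) = liminf_{k→∞} μ_k and w_n(ξ) = limsup_{k→∞} v_k. -/

import Mathlib

open Polynomial Filter

noncomputable section

/-- Height of an integer polynomial: maximum absolute value of its coefficients. -/
def polyHeight (P : Polynomial ℤ) : ℕ :=
  P.support.sup fun i => (P.coeff i).natAbs

/-- The set of exponents `w` admissible for the uniform exponent `ŵ_n(ξ)`. -/
def uniformExpSet (n : ℕ) (ξ : ℝ) : Set ℝ :=
  {w | ∀ᶠ X : ℝ in atTop, ∃ P : Polynomial ℤ, P.natDegree ≤ n ∧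
    (polyHeight P : ℝ) ≤ X ∧ 0 < |Polynomial.aeval ξ P| ∧
    |Polynomial.aeval ξ P| < X ^ (-w)}

/-- The uniform exponent `ŵ_n(ξ)`, as an extended real. -/
def wHat (n : ℕ) (ξ : ℝ) : EReal :=
  sSup ((fun w : ℝ => (w : EReal)) '' uniformExpSet n ξ)

/-- The set of exponents `w` admissible for the ordinary exponent `w_n(ξ)`. -/
def ordExpSet (n : ℕ) (ξ : ℝ) : Set ℝ :=
  {w | {P : Polynomial ℤ | P.natDegree ≤ n ∧ 0 < |Polynomial.aeval ξ P| ∧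
      |Polynomial.aeval ξ P| < (polyHeight P : ℝ) ^ (-w)}.Infinite}

/-- The ordinary exponent `w_n(ξ)`, as an extended real. -/
def wOrd (n : ℕ) (ξ : ℝ) : EReal :=
  sSup ((fun w : ℝ => (w : EReal)) '' ordExpSet n ξ)

/-- `P` (1-indexed: the relevant values are `P 1, P 2, …`) is the sequence of best
approximation polynomials associated to `(n, ξ)`. -/
structure IsBestApproxSeq (n : ℕ) (ξ : ℝ) (P : ℕ → Polynomial ℤ) : Prop where
  ne_zero : ∀ k, 1 ≤ k → P k ≠ 0
  deg_le : ∀ k, 1 ≤ k → (P k).natDegree ≤ n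
  height_lt : ∀ k, 1 ≤ k → polyHeight (P k) < polyHeight (P (k+1))
  eval_lt : ∀ k, 1 ≤ k → |Polynomial.aeval ξ (P (k+1))| < |Polynomial.aeval ξ (P k)|
  isMin : ∀ k, 1 ≤ k → ∀ Q : Polynomial ℤ, Q ≠ 0 → Q.natDegree ≤ n →
    polyHeight Q ≤ polyHeight (P k) →
    |Polynomial.aeval ξ (P k)| ≤ |Polynomial.aeval ξ Q|
  complete : ∀ Q : Polynomial ℤ, Q ≠ 0 → Q.natDegree ≤ n →
    (∀ R : Polynomial ℤ, R ≠ 0 → R.natDegree ≤ n → polyHeight R ≤ polyHeight Q →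
      |Polynomial.aeval ξ Q| ≤ |Polynomial.aeval ξ R|) →
    ∃ k, 1 ≤ k ∧ (Q = P k ∨ Q = -P k)

/-- The image of an integer polynomial in `ℚ[X]`. -/
def ratPoly (P : Polynomial ℤ) : Polynomial ℚ := P.map (Int.castRingHom ℚ)

/-- `k` is good for the sequence `P`: `P_{k-1}, P_k, P_{k+1}` are `ℚ`-linearly independent. -/
def Good (P : ℕ → Polynomial ℤ) (k : ℕ) : Prop :=
  LinearIndependent ℚ ![ratPoly (P (k-1)), ratPoly (P k), ratPoly (P (k+1))]

/-- `τ_k = log H_k / log H_{k-1}`. -/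
def tauk (P : ℕ → Polynomial ℤ) (k : ℕ) : ℝ :=
  Real.log (polyHeight (P k)) / Real.log (polyHeight (P (k-1)))

/-- `μ_k = -log |P_{k-1}(ξ)| / log H_k`. -/
def muk (ξ : ℝ) (P : ℕ → Polynomial ℤ) (k : ℕ) : ℝ :=
  - Real.log |Polynomial.aeval ξ (P (k-1))| / Real.log (polyHeight (P k))

/-- `v_k = -log |P_k(ξ)| / log H_k`. -/
def vk (ξ : ℝ) (P : ℕ → Polynomial ℤ) (k : ℕ) : ℝ :=
  - Real.log |Polynomial.aeval ξ (P k)| / Real.log (polyHeight (P k))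

/-- The set of integers `m ≥ k+1` such that `P_{k-1}, …, P_{m-1}` all lie in the
two-dimensional space spanned by `P_{k-1}` and `P_k`; its greatest element is `ℓ(k)`. -/
def ellSet (P : ℕ → Polynomial ℤ) (k : ℕ) : Set ℕ :=
  {m | k + 1 ≤ m ∧ ∀ j, k - 1 ≤ j → j ≤ m - 1 →
    ratPoly (P j) ∈ Submodule.span ℚ {ratPoly (P (k-1)), ratPoly (P k)}}

/-- The set `V_k = {P, T·P, …, T^{n-2}·P}` (as rational polynomials). -/
def Vset (n : ℕ) (A : Polynomial ℤ) : Set (Polynomial ℚ) :=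
  {q | ∃ i ≤ n - 2, q = Polynomial.X ^ i * ratPoly A}

/-- The trajectory `L_P(q) = max(log H(P) - q/(2n-2), log |P(ξ)| + q)`. -/
def LPtraj (n : ℕ) (ξ : ℝ) (Q : Polynomial ℤ) (q : ℝ) : ℝ :=
  max (Real.log (polyHeight Q) - q / (2*(n:ℝ)-2)) (Real.log |Polynomial.aeval ξ Q| + q)

/-- The `j`-th successive minimum function `L_j(q)`: the infimum over sets of `j`
linearly independent integer polynomials of degree at most `2n-2` of the maximum of
`L_P(q)` over the set. -/
def Lj (n : ℕ) (ξ : ℝ) (j : ℕ) (q : ℝ) : ℝ :=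
  sInf {y : ℝ | ∃ S : Finset (Polynomial ℤ), S.card = j ∧
    (∀ Q ∈ S, Q.natDegree ≤ 2*n-2) ∧
    LinearIndependent ℚ (fun Q : {x // x ∈ S} => ratPoly (Q : Polynomial ℤ)) ∧
    y = sSup ((fun Q => LPtraj n ξ Q q) '' (S : Set (Polynomial ℤ)))}


/-! ### Auxiliary lemmas -/

lemma one_le_polyHeight {P : Polynomial ℤ} (h : P ≠ 0) : 1 ≤ polyHeight P := by
  obtain ⟨i, hi⟩ := Polynomial.support_nonempty.2 h
  have : (P.coeff i).natAbs ≤ polyHeight P :=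
    Finset.le_sup (f := fun i => (P.coeff i).natAbs) hi
  have h2 : P.coeff i ≠ 0 := Polynomial.mem_support_iff.1 hi
  omega

lemma polyHeight_neg (P : Polynomial ℤ) : polyHeight (-P) = polyHeight P := by
  unfold polyHeight
  rw [Polynomial.support_neg]
  refine Finset.sup_congr rfl fun i _ => ?_
  simp

lemma natAbs_coeff_le (P : Polynomial ℤ) (i : ℕ) : (P.coeff i).natAbs ≤ polyHeight P := by
  by_cases hi : i ∈ P.support
  · exact Finset.le_sup (f := fun i => (P.coeff i).natAbs) hi
  · simp [Polynomial.notMem_support_iff.1 hi]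

lemma finite_poly (n B : ℕ) : {Q : Polynomial ℤ | Q.natDegree ≤ n ∧ polyHeight Q ≤ B}.Finite := by
  set f : Polynomial ℤ → (Fin (n+1) → ℤ) := fun Q i => Q.coeff i with hf
  have himg : (f '' {Q : Polynomial ℤ | Q.natDegree ≤ n ∧ polyHeight Q ≤ B}).Finite := by
    apply Set.Finite.subset (Set.Finite.pi (fun _ : Fin (n+1) => Set.finite_Icc (-(B:ℤ)) B))
    rintro g ⟨Q, ⟨hd, hh⟩, rfl⟩
    intro i _
    have := le_trans (natAbs_coeff_le Q i) hh
    simp only [hf, Set.mem_Icc]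
    omega
  apply Set.Finite.of_finite_image himg
  rintro Q1 ⟨h1, _⟩ Q2 ⟨h2, _⟩ hfe
  ext i
  by_cases hi : i ≤ n
  · have := congrFun hfe ⟨i, by omega⟩
    simpa [hf] using this
  · rw [Polynomial.coeff_eq_zero_of_natDegree_lt (by omega),
      Polynomial.coeff_eq_zero_of_natDegree_lt (by omega)]

lemma lt_rpow_iff_log {a H e : ℝ} (ha : 0 < a) (hH : 0 < H) :
    a < H ^ e ↔ Real.log a < e * Real.log H := by
  rw [← Real.log_rpow hH e]
  exact (Real.log_lt_log_iff ha (Real.rpow_pos_of_pos hH e)).symm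

section seq
variable {n : ℕ} {ξ : ℝ} {P : ℕ → Polynomial ℤ}

lemma H_mono (hP : IsBestApproxSeq n ξ P) :
    ∀ a b, 1 ≤ a → a ≤ b → polyHeight (P a) ≤ polyHeight (P b) := by
  intro a b ha hab
  induction b, hab using Nat.le_induction with
  | base => exact le_rfl
  | succ b hab ih => exact le_trans ih (le_of_lt (hP.height_lt b (le_trans ha hab)))

lemma H_smono (hP : IsBestApproxSeq n ξ P) :
    ∀ a b, 1 ≤ a → a < b → polyHeight (P a) < polyHeight (P b) :=
  fun a b ha hab =>
    lt_of_lt_of_le (hP.height_lt a ha) (H_mono hP (a+1) b (by omega) hab)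

lemma A_anti (hP : IsBestApproxSeq n ξ P) :
    ∀ a b, 1 ≤ a → a ≤ b → |Polynomial.aeval ξ (P b)| ≤ |Polynomial.aeval ξ (P a)| := by
  intro a b ha hab
  induction b, hab using Nat.le_induction with
  | base => exact le_rfl
  | succ b hab ih => exact le_trans (le_of_lt (hP.eval_lt b (le_trans ha hab))) ih

lemma le_H (hP : IsBestApproxSeq n ξ P) : ∀ k, 1 ≤ k → k ≤ polyHeight (P k) := by
  intro k hk
  induction k, hk using Nat.le_induction with
  | base => exact one_le_polyHeight (hP.ne_zero 1 le_rfl)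
  | succ k hk ih => have := hP.height_lt k hk; omega

set_option linter.unnecessarySeqFocus false in
lemma minFact (hP : IsBestApproxSeq n ξ P) {k : ℕ} (hk : 1 ≤ k)
    {Q : Polynomial ℤ} (hQ0 : Q ≠ 0) (hQd : Q.natDegree ≤ n)
    (hQH : polyHeight Q < polyHeight (P (k+1))) :
    |Polynomial.aeval ξ (P k)| ≤ |Polynomial.aeval ξ Q| := by
  set S := {R : Polynomial ℤ | R ≠ 0 ∧ R.natDegree ≤ n ∧ polyHeight R ≤ polyHeight Q} with hS
  have hfin : S.Finite :=
    (finite_poly n (polyHeight Q)).subset (fun R hR => ⟨hR.2.1, hR.2.2⟩)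
  have hne : S.Nonempty := ⟨Q, hQ0, hQd, le_rfl⟩
  obtain ⟨R₀, hR₀S, hmin⟩ :=
    Set.exists_min_image S (fun R => |Polynomial.aeval ξ R|) hfin hne
  obtain ⟨m, hm1, hcase⟩ := hP.complete R₀ hR₀S.1 hR₀S.2.1
    (fun R hR0 hRd hRH => hmin R ⟨hR0, hRd, le_trans hRH hR₀S.2.2⟩)
  have heval : |Polynomial.aeval ξ R₀| = |Polynomial.aeval ξ (P m)| := by
    rcases hcase with h | h <;> rw [h] <;> simp [map_neg]
  have hheight : polyHeight R₀ = polyHeight (P m) := by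
    rcases hcase with h | h <;> rw [h]
    exact polyHeight_neg _
  have hmk : m ≤ k := by
    by_contra h
    push_neg at h
    have h1 : polyHeight (P (k+1)) ≤ polyHeight (P m) :=
      H_mono hP (k+1) m (by omega) (by omega)
    have h2 : polyHeight R₀ ≤ polyHeight Q := hR₀S.2.2
    omega
  calc |Polynomial.aeval ξ (P k)| ≤ |Polynomial.aeval ξ (P m)| := A_anti hP m k hm1 hmk
    _ = |Polynomial.aeval ξ R₀| := heval.symm
    _ ≤ |Polynomial.aeval ξ Q| := hmin Q ⟨hQ0, hQd, le_rfl⟩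

end seq

/-- `ŵ_n(ξ) = liminf μ_k` and `w_n(ξ) = limsup v_k` (in the extended
reals). -/
theorem stmt19 (n : ℕ) (hn : 1 ≤ n) (ξ : ℝ)
    (hξ : ¬ ∃ Q : Polynomial ℤ, Q ≠ 0 ∧ Q.natDegree ≤ n ∧ Polynomial.aeval ξ Q = 0)
    (P : ℕ → Polynomial ℤ) (hP : IsBestApproxSeq n ξ P) :
    wHat n ξ = Filter.liminf (fun k => ((muk ξ P k : ℝ) : EReal)) Filter.atTop ∧
    wOrd n ξ = Filter.limsup (fun k => ((vk ξ P k : ℝ) : EReal)) Filter.atTop := by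
  classical
  -- positivity of |P_k(ξ)|
  have hApos : ∀ k : ℕ, 1 ≤ k → 0 < |Polynomial.aeval ξ (P k)| := by
    intro k hk
    refine abs_pos.2 fun h => hξ ⟨P k, hP.ne_zero k hk, hP.deg_le k hk, h⟩
  -- eventually |P_k(ξ)| < 1
  obtain ⟨N₁, hN₁1, hN₁⟩ : ∃ N₁ : ℕ, 1 ≤ N₁ ∧ ∀ k, N₁ ≤ k → |Polynomial.aeval ξ (P k)| < 1 := by
    set Q : Polynomial ℤ := Polynomial.X - Polynomial.C ⌊ξ⌋ with hQdef
    have hQ0 : Q ≠ 0 := Polynomial.X_sub_C_ne_zero _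
    have hQd : Q.natDegree ≤ n := by rw [hQdef, Polynomial.natDegree_X_sub_C]; exact hn
    have hQev : |Polynomial.aeval ξ Q| < 1 := by
      have : Polynomial.aeval ξ Q = ξ - (⌊ξ⌋ : ℝ) := by simp [hQdef]
      rw [this, Int.self_sub_floor, abs_of_nonneg (Int.fract_nonneg ξ)]
      exact Int.fract_lt_one ξ
    refine ⟨max 1 (polyHeight Q), le_max_left _ _, fun k hk => ?_⟩
    have hk1 : 1 ≤ k := le_trans (le_max_left _ _) hk
    have hQH : polyHeight Q ≤ polyHeight (P k) :=
      le_trans (le_trans (le_max_right 1 _) hk) (le_H hP k hk1)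
    exact lt_of_le_of_lt (hP.isMin k hk1 Q hQ0 hQd hQH) hQev
  -- log of heights is eventually positive
  have hH2 : ∀ k, 2 ≤ k → (2:ℝ) ≤ (polyHeight (P k) : ℝ) := by
    intro k hk
    have := le_H hP k (by omega)
    exact_mod_cast le_trans hk this
  have hlogpos : ∀ k, 2 ≤ k → 0 < Real.log (polyHeight (P k)) := by
    intro k hk
    exact Real.log_pos (lt_of_lt_of_le one_lt_two (hH2 k hk))
  have hHpos : ∀ k, 1 ≤ k → (0:ℝ) < (polyHeight (P k) : ℝ) := by
    intro k hk
    have := one_le_polyHeight (hP.ne_zero k hk)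
    exact_mod_cast lt_of_lt_of_le zero_lt_one (by exact_mod_cast this)
  constructor
  · -- uniform exponent
    apply le_antisymm
    · -- wHat ≤ liminf
      apply sSup_le
      rintro x ⟨w, hw, rfl⟩
      show (w : EReal) ≤ _
      refine le_liminf_of_le (by isBoundedDefault) ?_
      obtain ⟨X₀', hX₀'⟩ := eventually_atTop.1 hw
      set X₀ : ℝ := max X₀' 1 with hX₀def
      have hX₀ : ∀ X : ℝ, X₀ ≤ X → ∃ Q : Polynomial ℤ, Q.natDegree ≤ n ∧
          (polyHeight Q : ℝ) ≤ X ∧ 0 < |Polynomial.aeval ξ Q| ∧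
          |Polynomial.aeval ξ Q| < X ^ (-w) :=
        fun X hX => hX₀' X (le_trans (le_max_left _ _) hX)
      have hX₀1 : (1:ℝ) ≤ X₀ := le_max_right _ _
      rw [eventually_atTop]
      refine ⟨max 2 (⌈X₀⌉₊ + 2), fun k hk => ?_⟩
      rw [EReal.coe_le_coe_iff]
      obtain ⟨j, rfl⟩ : ∃ j, k = j + 1 := ⟨k - 1, by omega⟩
      have hj1 : 1 ≤ j := by omega
      have hHj : (X₀ + 1 : ℝ) ≤ (polyHeight (P (j+1)) : ℝ) := by
        have h1 : ⌈X₀⌉₊ + 2 ≤ polyHeight (P (j+1)) := by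
          have := le_H hP (j+1) (by omega)
          omega
        have h2 : X₀ ≤ (⌈X₀⌉₊ : ℝ) := Nat.le_ceil X₀
        have h3 : ((⌈X₀⌉₊ + 2 : ℕ) : ℝ) ≤ (polyHeight (P (j+1)) : ℝ) := by exact_mod_cast h1
        push_cast at h3
        linarith
      have hc : (0:ℝ) < (polyHeight (P (j+1)) : ℝ) := by linarith
      have key : ∀ m : ℕ, w * Real.log ((polyHeight (P (j+1)) : ℝ) - 1/(m+1)) ≤
          - Real.log |Polynomial.aeval ξ (P j)| := by
        intro m
        set X : ℝ := (polyHeight (P (j+1)) : ℝ) - 1/(m+1) with hXdef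
        have hm1 : (0:ℝ) < 1/((m:ℝ)+1) := by positivity
        have hm2 : 1/((m:ℝ)+1) ≤ 1 := by
          rw [div_le_one (by positivity)]
          simp
        have hXX₀ : X₀ ≤ X := by rw [hXdef]; linarith
        obtain ⟨Q, hQd, hQH, hQpos, hQlt⟩ := hX₀ X hXX₀
        have hQ0 : Q ≠ 0 := by
          rintro rfl
          simp at hQpos
        have hQHnat : polyHeight Q < polyHeight (P (j+1)) := by
          have h4 : (polyHeight Q : ℝ) < (polyHeight (P (j+1)) : ℝ) := by
            rw [hXdef] at hQH
            linarith
          exact_mod_cast h4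
        have hAQ : |Polynomial.aeval ξ (P j)| ≤ |Polynomial.aeval ξ Q| :=
          minFact hP hj1 hQ0 hQd hQHnat
        have hXpos : (0:ℝ) < X := lt_of_lt_of_le (lt_of_lt_of_le zero_lt_one hX₀1) hXX₀
        have h5 : |Polynomial.aeval ξ (P j)| < X ^ (-w) := lt_of_le_of_lt hAQ hQlt
        rw [lt_rpow_iff_log (hApos j hj1) hXpos] at h5
        linarith
      have htend : Tendsto
          (fun m : ℕ => w * Real.log ((polyHeight (P (j+1)) : ℝ) - 1/(m+1))) atTop
          (nhds (w * Real.log (polyHeight (P (j+1))))) := by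
        have h1 : Tendsto (fun m : ℕ => (polyHeight (P (j+1)) : ℝ) - 1/(m+1)) atTop
            (nhds (polyHeight (P (j+1)))) := by
          have h0 := tendsto_one_div_add_atTop_nhds_zero_nat (𝕜 := ℝ)
          have hconst : Tendsto (fun _ : ℕ => (polyHeight (P (j+1)) : ℝ)) atTop
              (nhds (polyHeight (P (j+1)))) := tendsto_const_nhds
          simpa using hconst.sub h0
        exact (h1.log hc.ne').const_mul w
      have hle : w * Real.log (polyHeight (P (j+1))) ≤ - Real.log |Polynomial.aeval ξ (P j)| :=
        le_of_tendsto htend (Eventually.of_forall key)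
      have hlg : 0 < Real.log (polyHeight (P (j+1))) := hlogpos (j+1) (by omega)
      show w ≤ muk ξ P (j+1)
      unfold muk
      simp only [Nat.add_sub_cancel]
      exact (le_div_iff₀ hlg).2 hle
    · -- liminf ≤ wHat
      by_contra hlt
      push_neg at hlt
      obtain ⟨c, hc1, hc2⟩ := EReal.exists_between_coe_real hlt
      have hfreq : ∀ᶠ k in atTop, (c : EReal) < ((muk ξ P k : ℝ) : EReal) :=
        eventually_lt_of_lt_liminf hc2
      obtain ⟨N₂, hN₂⟩ := eventually_atTop.1 hfreq
      set N : ℕ := max (max N₁ 2) N₂ with hNdef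
      have hmem : c ∈ uniformExpSet n ξ := by
        unfold uniformExpSet
        rw [Set.mem_setOf_eq, eventually_atTop]
        refine ⟨(polyHeight (P N) : ℝ), fun X hX => ?_⟩
        have hN2 : 2 ≤ N := le_trans (le_max_right N₁ 2) (le_max_left _ _)
        have hN1 : 1 ≤ N := by omega
        have hX2 : (2:ℝ) ≤ X := le_trans (hH2 N hN2) hX
        have hXpos : (0:ℝ) < X := by linarith
        set k : ℕ := Nat.findGreatest (fun j => (polyHeight (P j) : ℝ) ≤ X) ⌊X⌋₊ with hkdef
        have hNfl : N ≤ ⌊X⌋₊ := by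
          apply Nat.le_floor
          exact le_trans (by exact_mod_cast le_H hP N hN1) hX
        have hkN : N ≤ k :=
          Nat.le_findGreatest (P := fun j => (polyHeight (P j) : ℝ) ≤ X) hNfl hX
        have hkH : (polyHeight (P k) : ℝ) ≤ X :=
          Nat.findGreatest_spec (P := fun j => (polyHeight (P j) : ℝ) ≤ X) hNfl hX
        have hk2 : 2 ≤ k := le_trans hN2 hkN
        have hk1succ : (2:ℕ) ≤ k + 1 := by omega
        have hkH1 : X < (polyHeight (P (k+1)) : ℝ) := by
          by_cases hcase : k + 1 ≤ ⌊X⌋₊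
          · have := Nat.findGreatest_is_greatest
              (P := fun j => (polyHeight (P j) : ℝ) ≤ X) (k := k+1) (by omega) hcase
            exact not_le.1 this
          · push_neg at hcase
            have h1 : (⌊X⌋₊ : ℝ) ≤ (k : ℝ) := by exact_mod_cast Nat.lt_succ_iff.1 hcase
            have h2 : ((k+1 : ℕ) : ℝ) ≤ (polyHeight (P (k+1)) : ℝ) := by
              exact_mod_cast le_H hP (k+1) (by omega)
            have h3 := Nat.lt_floor_add_one X
            push_cast at h2 ⊢
            linarith
        refine ⟨P k, hP.deg_le k (by omega), hkH, hApos k (by omega), ?_⟩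
        -- |P k (ξ)| < X ^ (-c)
        have hmuk : c < muk ξ P (k+1) := by
          have := hN₂ (k+1) (le_trans (le_max_right (max N₁ 2) N₂) (by omega))
          exact_mod_cast this
        have hlg : 0 < Real.log (polyHeight (P (k+1))) := hlogpos (k+1) hk1succ
        have h6 : c * Real.log (polyHeight (P (k+1))) < - Real.log |Polynomial.aeval ξ (P k)| := by
          rw [muk] at hmuk
          simp only [Nat.add_sub_cancel] at hmuk
          exact (lt_div_iff₀ hlg).1 hmuk
        rw [lt_rpow_iff_log (hApos k (by omega)) hXpos]
        have hlogX : Real.log X ≤ Real.log (polyHeight (P (k+1))) :=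
          Real.log_le_log hXpos (le_of_lt hkH1)
        rcases le_or_gt 0 c with hc0 | hc0
        · nlinarith
        · have hAk1 : |Polynomial.aeval ξ (P k)| < 1 :=
            hN₁ k (le_trans (le_trans (le_max_left N₁ 2) (le_max_left _ _)) hkN)
          have hlogAneg : Real.log |Polynomial.aeval ξ (P k)| < 0 :=
            Real.log_neg (hApos k (by omega)) hAk1
          have hlogXpos : (0:ℝ) ≤ Real.log X := Real.log_nonneg (by linarith)
          nlinarith
      have : (c : EReal) ≤ wHat n ξ := le_sSup ⟨c, hmem, rfl⟩
      exact absurd (lt_of_le_of_lt this hc1) (lt_irrefl _)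
  · -- ordinary exponent
    apply le_antisymm
    · -- wOrd ≤ limsup
      apply sSup_le
      rintro x ⟨w, hw, rfl⟩
      show (w : EReal) ≤ _
      refine le_limsup_of_frequently_le ?_ (by isBoundedDefault)
      rcases le_or_gt w 0 with hw0 | hw0
      · -- w ≤ 0 : eventually 0 ≤ vk
        apply Eventually.frequently
        rw [eventually_atTop]
        refine ⟨max N₁ 2, fun k hk => ?_⟩
        have hk2 : 2 ≤ k := le_trans (le_max_right _ _) hk
        have hkN₁ : N₁ ≤ k := le_trans (le_max_left _ _) hk
        have hvk : 0 ≤ vk ξ P k := by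
          unfold vk
          apply div_nonneg _ (le_of_lt (hlogpos k hk2))
          have := Real.log_neg (hApos k (by omega)) (hN₁ k hkN₁)
          linarith
        exact le_trans (EReal.coe_le_coe_iff.2 hw0) (EReal.coe_le_coe_iff.2 hvk)
      · -- w > 0
        rw [frequently_atTop]
        intro N₀
        set N : ℕ := max N₀ 2 with hNdef
        have hN2 : 2 ≤ N := le_max_right _ _
        have hN1 : 1 ≤ N := by omega
        -- pick Q in the infinite set with large height
        have hfin := finite_poly n (polyHeight (P N))
        obtain ⟨Q, hQS, hQT⟩ := (hw.diff hfin).nonempty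
        obtain ⟨hQd, hQpos, hQlt⟩ := hQS
        have hQheight : polyHeight (P N) < polyHeight Q := by
          by_contra hcon
          push_neg at hcon
          exact hQT ⟨hQd, hcon⟩
        have hQ0 : Q ≠ 0 := by
          rintro rfl
          simp at hQpos
        set k : ℕ := Nat.findGreatest (fun j => polyHeight (P j) ≤ polyHeight Q)
          (polyHeight Q) with hkdef
        have hwit : N ≤ polyHeight Q := le_trans (le_H hP N hN1) (by omega)
        have hPNle : polyHeight (P N) ≤ polyHeight Q := le_of_lt hQheight
        have hkN : N ≤ k :=
          Nat.le_findGreatest (P := fun j => polyHeight (P j) ≤ polyHeight Q) hwit hPNle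
        have hkH : polyHeight (P k) ≤ polyHeight Q :=
          Nat.findGreatest_spec (P := fun j => polyHeight (P j) ≤ polyHeight Q) hwit hPNle
        have hk2 : 2 ≤ k := le_trans hN2 hkN
        have hkH1 : polyHeight Q < polyHeight (P (k+1)) := by
          by_cases hcase : k + 1 ≤ polyHeight Q
          · have := Nat.findGreatest_is_greatest
              (P := fun j => polyHeight (P j) ≤ polyHeight Q) (k := k+1) (by omega) hcase
            omega
          · have := le_H hP (k+1) (by omega)
            omega
        have hAQ : |Polynomial.aeval ξ (P k)| ≤ |Polynomial.aeval ξ Q| :=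
          minFact hP (by omega) hQ0 hQd hkH1
        refine ⟨k, le_trans (le_max_left N₀ 2) hkN, ?_⟩
        have hQHpos : (0:ℝ) < (polyHeight Q : ℝ) := by
          have := one_le_polyHeight hQ0
          exact_mod_cast lt_of_lt_of_le zero_lt_one (by exact_mod_cast this)
        have h5 : |Polynomial.aeval ξ (P k)| < (polyHeight Q : ℝ) ^ (-w) :=
          lt_of_le_of_lt hAQ hQlt
        rw [lt_rpow_iff_log (hApos k (by omega)) hQHpos] at h5
        have hlogle : Real.log (polyHeight (P k)) ≤ Real.log (polyHeight Q) :=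
          Real.log_le_log (hHpos k (by omega)) (by exact_mod_cast hkH)
        have hlg : 0 < Real.log (polyHeight (P k)) := hlogpos k hk2
        have hvk : w ≤ vk ξ P k := by
          unfold vk
          rw [le_div_iff₀ hlg]
          nlinarith
        exact EReal.coe_le_coe_iff.2 hvk
    · -- limsup ≤ wOrd
      by_contra hlt
      push_neg at hlt
      obtain ⟨c, hc1, hc2⟩ := EReal.exists_between_coe_real hlt
      have hfreq : ∃ᶠ k in atTop, (c : EReal) < ((vk ξ P k : ℝ) : EReal) :=
        frequently_lt_of_lt_limsup (by isBoundedDefault) hc2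
      have hmem : c ∈ ordExpSet n ξ := by
        unfold ordExpSet
        rw [Set.mem_setOf_eq]
        have hfreq2 : ∃ᶠ k in atTop, ((c : EReal) < ((vk ξ P k : ℝ) : EReal)) ∧ 2 ≤ k :=
          hfreq.and_eventually (eventually_ge_atTop 2)
        have hinf : {k : ℕ | ((c : EReal) < ((vk ξ P k : ℝ) : EReal)) ∧ 2 ≤ k}.Infinite :=
          Nat.frequently_atTop_iff_infinite.1 hfreq2
        have hinj : Set.InjOn P {k : ℕ | ((c : EReal) < ((vk ξ P k : ℝ) : EReal)) ∧ 2 ≤ k} := by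
          intro a ha b hb hab
          obtain ⟨-, ha2⟩ := ha
          obtain ⟨-, hb2⟩ := hb
          by_contra hne
          rcases Nat.lt_or_ge a b with h | h
          · have := H_smono hP a b (by omega) h
            rw [hab] at this
            omega
          · have hba : b < a := by omega
            have := H_smono hP b a (by omega) hba
            rw [hab] at this
            omega
        refine Set.Infinite.mono ?_ (hinf.image hinj)
        rintro _ ⟨k, ⟨hck, hk2⟩, rfl⟩
        have hck' : c < vk ξ P k := by exact_mod_cast hck
        have hlg : 0 < Real.log (polyHeight (P k)) := hlogpos k hk2
        refine ⟨hP.deg_le k (by omega), hApos k (by omega), ?_⟩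
        rw [lt_rpow_iff_log (hApos k (by omega)) (hHpos k (by omega))]
        unfold vk at hck'
        rw [lt_div_iff₀ hlg] at hck'
        linarith
      have : (c : EReal) ≤ wOrd n ξ := le_sSup ⟨c, hmem, rfl⟩
      exact absurd (lt_of_le_of_lt this hc1) (lt_irrefl _)
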